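/- For distinct real numbers λ₁,…,λ_{n+1}, ∑_{σ∈S_{n+1}} ∑_{k=1}^{n} (λ_{σ(1)} + ⋯ + λ_{σ(k)})/(λ_{σ(k)} − λ_{σ(k+1)}) = C(n+1,2)·n!. -/

import Mathlib

open Finset

theorem stmt1 (n : ℕ) (l : Fin (n+1) → ℝ) (hl : Function.Injective l) :
    ∑ σ : Equiv.Perm (Fin (n+1)), ∑ k : Fin n,
      (∑ i ∈ Finset.Iic k.castSucc, l (σ i)) / (l (σ k.castSucc) - l (σ k.succ))
    = ((n+1).choose 2 : ℝ) * n.factorial := by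
  rw [Finset.sum_comm]
  have key : ∀ k : Fin n, ∑ σ : Equiv.Perm (Fin (n+1)),
      (∑ i ∈ Finset.Iic k.castSucc, l (σ i)) / (l (σ k.castSucc) - l (σ k.succ))
      = ((n+1).factorial : ℝ) / 2 := by
    intro k
    set a := k.castSucc with ha
    set b := k.succ with hb
    have hab : a ≠ b := (Fin.castSucc_lt_succ : k.castSucc < k.succ).ne
    set f : Equiv.Perm (Fin (n+1)) → ℝ := fun σ =>
      (∑ i ∈ Finset.Iic a, l (σ i)) / (l (σ a) - l (σ b)) with hf
    have hpair : ∀ σ : Equiv.Perm (Fin (n+1)), f σ + f (σ * Equiv.swap a b) = 1 := by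
      intro σ
      have hne : l (σ a) ≠ l (σ b) := fun h => hab (σ.injective (hl h))
      have hsub : l (σ a) - l (σ b) ≠ 0 := sub_ne_zero.mpr hne
      have hIic : (Finset.Iic a) = insert a (Finset.Iio a) := (Finset.Iio_insert a).symm
      have hnm : a ∉ Finset.Iio a := by simp
      have hsum1 : ∑ i ∈ Finset.Iic a, l ((σ * Equiv.swap a b) i)
          = l (σ b) + ∑ i ∈ Finset.Iio a, l (σ i) := by
        rw [hIic, Finset.sum_insert hnm]
        simp only [Equiv.Perm.mul_apply, Equiv.swap_apply_left]
        congr 1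
        refine Finset.sum_congr rfl fun i hi => ?_
        have hia : i ≠ a := (Finset.mem_Iio.mp hi).ne
        have hib : i ≠ b := ((Finset.mem_Iio.mp hi).trans (Fin.castSucc_lt_succ : k.castSucc < k.succ)).ne
        rw [Equiv.swap_apply_of_ne_of_ne hia hib]
      have hsum2 : ∑ i ∈ Finset.Iic a, l (σ i) = l (σ a) + ∑ i ∈ Finset.Iio a, l (σ i) := by
        rw [hIic, Finset.sum_insert hnm]
      have hsum1' : ∑ i ∈ Finset.Iic a, l (σ (Equiv.swap a b i))
          = l (σ b) + ∑ i ∈ Finset.Iio a, l (σ i) := by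
        simpa [Equiv.Perm.mul_apply] using hsum1
      have h2 : f (σ * Equiv.swap a b)
          = (l (σ b) + ∑ i ∈ Finset.Iio a, l (σ i)) / (l (σ b) - l (σ a)) := by
        simp only [hf, Equiv.Perm.mul_apply, Equiv.swap_apply_left,
          Equiv.swap_apply_right, hsum1']
      have hsub' : l (σ b) - l (σ a) ≠ 0 := sub_ne_zero.mpr hne.symm
      rw [h2, hf]
      simp only [hsum2]
      rw [div_add_div _ _ hsub hsub', div_eq_one_iff_eq (mul_ne_zero hsub hsub')]
      ring
    have hbij : ∑ σ : Equiv.Perm (Fin (n+1)), f σ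
        = ∑ σ : Equiv.Perm (Fin (n+1)), f (σ * Equiv.swap a b) := by
      exact (Fintype.sum_equiv (Equiv.mulRight (Equiv.swap a b)) _ _ (fun σ => rfl)).symm
    have h2S : (∑ σ : Equiv.Perm (Fin (n+1)), f σ) * 2 = ((n+1).factorial : ℝ) := by
      have : (∑ σ : Equiv.Perm (Fin (n+1)), f σ) + (∑ σ, f (σ * Equiv.swap a b))
          = ∑ σ : Equiv.Perm (Fin (n+1)), (1 : ℝ) := by
        rw [← Finset.sum_add_distrib]
        exact Finset.sum_congr rfl fun σ _ => hpair σ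
      rw [← hbij] at this
      have hcard : ∑ σ : Equiv.Perm (Fin (n+1)), (1:ℝ)
          = ((n+1).factorial : ℝ) := by
        rw [Finset.sum_const, Finset.card_univ, Fintype.card_perm, Fintype.card_fin]
        simp
      linarith [this, hcard]
    have := h2S
    show (∑ σ : Equiv.Perm (Fin (n+1)), f σ) = ((n+1).factorial : ℝ) / 2
    linarith
  rw [Finset.sum_congr rfl fun k _ => key k]
  rw [Finset.sum_const, Finset.card_univ, Fintype.card_fin, Nat.cast_choose_two]
  rw [nsmul_eq_mul, Nat.factorial_succ]
  push_cast
  ring
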